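/- Let α ∈ (0,1), let f satisfy assumption A1 with constant λ ≥ 0, and suppose in addition there are constants σ₁ ≤ 0 ≤ σ₂ with f(t, σ₁) ≤ 0 and f(t, σ₂) ≥ 0 for all t ∈ [0,T]. Let the temporal mesh satisfy λ τ_j^α < 1/Γ(2−α) for all j, and let σ₁ ≤ u₀ ≤ σ₂. Then the unique sequence (U^m)_{m=0}^M with U⁰ = u₀ and δ_t^α U^m + f(t_m, U^m) = 0 for all m = 1,…,M satisfies σ₁ ≤ U^m ≤ σ₂ for all m = 0,…,M. -/

import Mathlib

open Real MeasureTheory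

/-- The L1 discrete Caputo operator of order `α` on the temporal mesh `t`. -/
noncomputable def deltaL1 (α : ℝ) (t : ℕ → ℝ) (V : ℕ → ℝ) (m : ℕ) : ℝ :=
  (1 / Real.Gamma (1 - α)) *
    ∑ j ∈ Finset.Icc 1 m,
      ((V j - V (j - 1)) / (t j - t (j - 1))) *
        ∫ s in (t (j - 1))..(t j), (t m - s) ^ (-α)

lemma integral_ker {α a b c : ℝ} (hα1 : α < 1) :
    (∫ s in a..b, (c - s) ^ (-α)) =
      ((c - a) ^ (1 - α) - (c - b) ^ (1 - α)) / (1 - α) := by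
  rw [intervalIntegral.integral_comp_sub_left (fun x : ℝ => x ^ (-α)) c]
  rw [integral_rpow (Or.inl (by linarith))]
  have h1 : -α + 1 = 1 - α := by ring
  rw [h1]

lemma abel_bound (b V : ℕ → ℝ) (m : ℕ) (hm : 1 ≤ m)
    (hb : ∀ j, 1 ≤ j → j ≤ m → 0 < b j)
    (hbmono : ∀ j, 1 ≤ j → j + 1 ≤ m → b j ≤ b (j + 1))
    (hV : ∀ j, j < m → V j ≤ 0) :
    b m * V m ≤ ∑ j ∈ Finset.Icc 1 m, b j * (V j - V (j - 1)) := by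
  induction m, hm using Nat.le_induction with
  | base =>
    rw [Finset.Icc_self, Finset.sum_singleton]
    have h1 := hb 1 le_rfl le_rfl
    have h2 := hV 0 one_pos
    simp only [Nat.sub_self]
    nlinarith
  | succ n hn ih =>
    rw [Finset.sum_Icc_succ_top (by omega : 1 ≤ n + 1)]
    have h1 := ih (fun j ha hb' => hb j ha (by omega))
      (fun j ha hb' => hbmono j ha (by omega)) (fun j hj => hV j (by omega))
    have h2 : b n ≤ b (n + 1) := hbmono n hn (by omega)
    have h3 : V n ≤ 0 := hV n (by omega)
    have h4 : (0:ℝ) < b n := hb n hn (by omega)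
    have h5 : n + 1 - 1 = n := by omega
    rw [h5]
    nlinarith

lemma deltaL1_neg (α : ℝ) (t U : ℕ → ℝ) (m : ℕ) :
    deltaL1 α t (fun j => -U j) m = -(deltaL1 α t U m) := by
  unfold deltaL1
  rw [← mul_neg, ← Finset.sum_neg_distrib]
  congr 1
  apply Finset.sum_congr rfl
  intro j _
  ring

lemma upper_core (α T lam σ : ℝ) (hα : α ∈ Set.Ioo (0 : ℝ) 1) (hlam : 0 ≤ lam)
    (f : ℝ → ℝ → ℝ)
    (hfA1 : ∀ t' s₁ s₂, s₂ ≤ s₁ → f t' s₁ - f t' s₂ ≥ -lam * (s₁ - s₂))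
    (hfσ : ∀ t' ∈ Set.Icc (0 : ℝ) T, 0 ≤ f t' σ)
    (M : ℕ) (hM : 1 ≤ M) (t : ℕ → ℝ) (ht0 : t 0 = 0) (htM : t M = T)
    (hmono : ∀ j, j < M → t j < t (j + 1))
    (hmesh : ∀ j, 1 ≤ j → j ≤ M →
      lam * (t j - t (j - 1)) ^ α < 1 / Real.Gamma (2 - α))
    (U : ℕ → ℝ) (hU0 : U 0 ≤ σ)
    (hU : ∀ m, 1 ≤ m → m ≤ M → deltaL1 α t U m + f (t m) (U m) = 0) :
    ∀ m, m ≤ M → U m ≤ σ := by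
  obtain ⟨hα0, hα1⟩ := hα
  have ht_le : ∀ j : ℕ, j ≤ M → ∀ i : ℕ, i ≤ j → t i ≤ t j := by
    intro j
    induction j with
    | zero =>
      intro _ i hi
      have h : i = 0 := by omega
      rw [h]
    | succ n ihn =>
      intro hj i hi
      rcases Nat.lt_or_ge i (n + 1) with h | h
      · exact le_trans (ihn (by omega) i (by omega)) (le_of_lt (hmono n (by omega)))
      · have h' : i = n + 1 := by omega
        rw [h']
  have ht_lt : ∀ i j : ℕ, i < j → j ≤ M → t i < t j := by
    intro i j hij hjM
    have h1 : t i ≤ t (j - 1) := ht_le (j - 1) (by omega) i (by omega)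
    have h2 : t (j - 1) < t j := by
      have h := hmono (j - 1) (by omega)
      rwa [Nat.sub_add_cancel (by omega)] at h
    linarith
  have hΓ1 : 0 < Real.Gamma (1 - α) := Real.Gamma_pos_of_pos (by linarith)
  have hΓ2 : Real.Gamma (2 - α) = (1 - α) * Real.Gamma (1 - α) := by
    have h : (2:ℝ) - α = (1 - α) + 1 := by ring
    rw [h, Real.Gamma_add_one (by linarith)]
  intro m
  induction m using Nat.strong_induction_on with
  | _ m ih =>
    intro hmM
    rcases Nat.eq_zero_or_pos m with rfl | hm1
    · exact hU0
    by_contra hcon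
    push_neg at hcon
    set b : ℕ → ℝ :=
      fun j => ((t m - t (j - 1)) ^ (1 - α) - (t m - t j) ^ (1 - α)) / (t j - t (j - 1))
      with hbdef
    have hτpos : ∀ j, 1 ≤ j → j ≤ M → 0 < t j - t (j - 1) := by
      intro j h1 h2
      have := ht_lt (j - 1) j (by omega) h2
      linarith
    have hbpos : ∀ j, 1 ≤ j → j ≤ m → 0 < b j := by
      intro j h1 h2
      apply div_pos _ (hτpos j h1 (le_trans h2 hmM))
      have h3 : t m - t j < t m - t (j - 1) := by
        have := ht_lt (j - 1) j (by omega) (le_trans h2 hmM)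
        linarith
      have h4 : 0 ≤ t m - t j := by
        rcases eq_or_lt_of_le h2 with rfl | h
        · simp
        · have := ht_le m hmM j (le_of_lt h); linarith
      have h5 := Real.rpow_lt_rpow h4 h3 (by linarith : (0:ℝ) < 1 - α)
      linarith
    have hbmono : ∀ j, 1 ≤ j → j + 1 ≤ m → b j ≤ b (j + 1) := by
      intro j h1 h2
      have hx : t m - t (j + 1) ∈ Set.Ici (0:ℝ) := by
        simp only [Set.mem_Ici]
        have := ht_le m hmM (j + 1) h2
        linarith
      have hz : t m - t (j - 1) ∈ Set.Ici (0:ℝ) := by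
        simp only [Set.mem_Ici]
        have := ht_le m hmM (j - 1) (by omega)
        linarith
      have hxy : t m - t (j + 1) < t m - t j := by
        have := ht_lt j (j + 1) (by omega) (le_trans h2 hmM)
        linarith
      have hyz : t m - t j < t m - t (j - 1) := by
        have := ht_lt (j - 1) j (by omega) (le_trans (by omega : j ≤ m) hmM)
        linarith
      have hsl := (Real.concaveOn_rpow (by linarith : (0:ℝ) ≤ 1 - α)
        (by linarith)).slope_anti_adjacent hx hz hxy hyz
      simp only [hbdef, Nat.add_sub_cancel]
      have e1 : t m - t (j - 1) - (t m - t j) = t j - t (j - 1) := by ring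
      have e2 : t m - t j - (t m - t (j + 1)) = t (j + 1) - t j := by ring
      rw [e1, e2] at hsl
      exact hsl
    have hdelta : deltaL1 α t U m =
        (1 / ((1 - α) * Real.Gamma (1 - α))) *
          ∑ j ∈ Finset.Icc 1 m, b j * (U j - U (j - 1)) := by
      unfold deltaL1
      rw [Finset.mul_sum, Finset.mul_sum]
      apply Finset.sum_congr rfl
      intro j hj
      simp only [Finset.mem_Icc] at hj
      rw [integral_ker hα1]
      simp only [hbdef]
      have hτ : t j - t (j - 1) ≠ 0 := ne_of_gt (hτpos j hj.1 (le_trans hj.2 hmM))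
      have hne : (1:ℝ) - α ≠ 0 := by linarith
      field_simp [hτ, hne, hΓ1.ne']
    have habel := abel_bound b (fun j => U j - σ) m hm1 hbpos hbmono
      (fun j hj => by
        have := ih j hj (le_trans (le_of_lt hj) hmM)
        simp only [sub_nonpos]
        exact this)
    have hsum_eq : (∑ j ∈ Finset.Icc 1 m, b j * ((U j - σ) - (U (j - 1) - σ)))
        = ∑ j ∈ Finset.Icc 1 m, b j * (U j - U (j - 1)) := by
      apply Finset.sum_congr rfl
      intro j _
      ring
    rw [hsum_eq] at habel
    have hτm : 0 < t m - t (m - 1) := hτpos m hm1 hmM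
    have hbm : b m = (t m - t (m - 1)) ^ (-α) := by
      simp only [hbdef]
      rw [sub_self, Real.zero_rpow (by linarith : (1:ℝ) - α ≠ 0), sub_zero,
        show -α = (1 - α) - 1 from by ring, Real.rpow_sub_one (ne_of_gt hτm)]
    have htm_mem : t m ∈ Set.Icc (0:ℝ) T := by
      constructor
      · rw [← ht0]; exact ht_le m hmM 0 (by omega)
      · rw [← htM]; exact ht_le M le_rfl m hmM
    have hf1 := hfA1 (t m) (U m) σ (le_of_lt hcon)
    have hf2 := hfσ (t m) htm_mem
    have hD : deltaL1 α t U m ≤ lam * (U m - σ) := by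
      have heq := hU m hm1 hmM
      linarith
    have hC : 0 < 1 / ((1 - α) * Real.Gamma (1 - α)) := div_pos one_pos (mul_pos (by linarith) hΓ1)
    have h6 : (1 / ((1 - α) * Real.Gamma (1 - α))) * (b m * (U m - σ)) ≤ lam * (U m - σ) := by
      calc (1 / ((1 - α) * Real.Gamma (1 - α))) * (b m * (U m - σ))
          ≤ (1 / ((1 - α) * Real.Gamma (1 - α))) *
            ∑ j ∈ Finset.Icc 1 m, b j * (U j - U (j - 1)) :=
            mul_le_mul_of_nonneg_left habel (le_of_lt hC)
        _ = deltaL1 α t U m := hdelta.symm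
        _ ≤ lam * (U m - σ) := hD
    have hUmσ : 0 < U m - σ := by linarith
    have h7 : (1 / ((1 - α) * Real.Gamma (1 - α))) * b m ≤ lam := by
      have h6' : (1 / ((1 - α) * Real.Gamma (1 - α)) * b m) * (U m - σ)
          ≤ lam * (U m - σ) := by
        rw [mul_assoc]; exact h6
      exact le_of_mul_le_mul_right h6' hUmσ
    have hτα : 0 < (t m - t (m - 1)) ^ α := Real.rpow_pos_of_pos hτm α
    have h10 : b m * (t m - t (m - 1)) ^ α = 1 := by
      rw [hbm, ← Real.rpow_add hτm, neg_add_cancel, Real.rpow_zero]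
    have h8 : 1 / Real.Gamma (2 - α) ≤ lam * (t m - t (m - 1)) ^ α := by
      calc 1 / Real.Gamma (2 - α)
          = 1 / ((1 - α) * Real.Gamma (1 - α)) * (b m * (t m - t (m - 1)) ^ α) := by
            rw [h10, hΓ2]; ring
        _ = (1 / ((1 - α) * Real.Gamma (1 - α)) * b m) * (t m - t (m - 1)) ^ α := by ring
        _ ≤ lam * (t m - t (m - 1)) ^ α := mul_le_mul_of_nonneg_right h7 (le_of_lt hτα)
    exact absurd h8 (not_le.mpr (hmesh m hm1 hmM))

theorem stmt10
    (α T lam σ₁ σ₂ : ℝ) (hα : α ∈ Set.Ioo (0 : ℝ) 1) (hT : 0 < T) (hlam : 0 ≤ lam)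
    (f : ℝ → ℝ → ℝ)
    (hfc : ∀ t', Continuous fun s => f t' s)
    (hfA1 : ∀ t' s₁ s₂, s₂ ≤ s₁ → f t' s₁ - f t' s₂ ≥ -lam * (s₁ - s₂))
    (hσ₁ : σ₁ ≤ 0) (hσ₂ : 0 ≤ σ₂)
    (hfσ₁ : ∀ t' ∈ Set.Icc (0 : ℝ) T, f t' σ₁ ≤ 0)
    (hfσ₂ : ∀ t' ∈ Set.Icc (0 : ℝ) T, 0 ≤ f t' σ₂)
    (M : ℕ) (hM : 1 ≤ M) (t : ℕ → ℝ)
    (ht0 : t 0 = 0) (htM : t M = T)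
    (hmono : ∀ j, j < M → t j < t (j + 1))
    (hmesh : ∀ j, 1 ≤ j → j ≤ M →
      lam * (t j - t (j - 1)) ^ α < 1 / Real.Gamma (2 - α))
    (u₀ : ℝ) (hu₀ : σ₁ ≤ u₀ ∧ u₀ ≤ σ₂)
    (U : ℕ → ℝ)
    (hU0 : U 0 = u₀)
    (hU : ∀ m, 1 ≤ m → m ≤ M → deltaL1 α t U m + f (t m) (U m) = 0) :
    ∀ m, m ≤ M → σ₁ ≤ U m ∧ U m ≤ σ₂ := by
  intro m hm
  constructor
  · have h := upper_core α T lam (-σ₁) hα hlam (fun t' s => -f t' (-s))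
      (by
        intro t' s₁ s₂ hle
        have h2 := hfA1 t' (-s₂) (-s₁) (by linarith)
        simp only [ge_iff_le] at h2 ⊢
        linarith)
      (by intro t' ht'; simp only [neg_neg]; linarith [hfσ₁ t' ht'])
      M hM t ht0 htM hmono hmesh (fun j => -U j)
      (by simp only [hU0]; linarith [hu₀.1])
      (by
        intro m' h1 h2
        rw [deltaL1_neg]
        simp only [neg_neg]
        linarith [hU m' h1 h2])
      m hm
    linarith
  · exact upper_core α T lam σ₂ hα hlam f hfA1 hfσ₂ M hM t ht0 htM hmono hmesh U
      (by rw [hU0]; exact hu₀.2) hU m hm
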